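/- Let CP=(P_0,P_1) be a 2-PDS communicating via a finite set Locks and let Comp = s_0 -> ... -> s_m be a non-well-bracketed computation of CP. Let l_min be the least first component over all witnesses of non-well-bracketing of Comp, suppose the transition at position l_min is a procedure call of thread i, let l_rt be the position of its matching return, and let l_sm be the least second component among witnesses of the form (l_min, l_2, l_rt). Then: (1) every procedure return of thread 1-i at a position p with l_min < p < l_sm has its matching call at a position strictly greater than l_min; and (2) every procedure call of thread 1-i at a position p with l_min < p < l_sm has a matching return at a position strictly less than l_sm. -/
import Mathlib


/-- Transition labels of a pushdown system using locks. -/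
inductive Label (L : Type) : Type where
  | state : Label L
  | push : Label L
  | pop : Label L
  | acq : L → Label L
  | rel : L → Label L

/-- A pushdown system (PDS) using the set of locks `L`, with control states `Q`
and stack alphabet `Γ`. -/
structure PDS (Q Γ L : Type) where
  start : Q
  stateTr : Set (Q × Q)
  pushTr : Set (Q × (Q × Γ))
  popTr : Set ((Q × Γ) × Q)
  acqTr : Set (Q × (Q × L))
  relTr : Set ((Q × L) × Q)

/-- A local configuration of one thread: control state, stack and held locks. -/
abbrev LConf (Q Γ L : Type) : Type := Q × List Γ × Set L

/-- One labelled step of a single thread, in an environment where the locks in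
`free` are free (held by no thread). -/
def PDS.LStep {Q Γ L : Type} (P : PDS Q Γ L) (free : Set L) (c : LConf Q Γ L) :
    Label L → LConf Q Γ L → Prop
  | .state, c' => (c.1, c'.1) ∈ P.stateTr ∧ c'.2.1 = c.2.1 ∧ c'.2.2 = c.2.2
  | .push, c' => ∃ a, (c.1, (c'.1, a)) ∈ P.pushTr ∧ c'.2.1 = c.2.1 ++ [a] ∧ c'.2.2 = c.2.2
  | .pop, c' => ∃ a, ((c.1, a), c'.1) ∈ P.popTr ∧ c.2.1 = c'.2.1 ++ [a] ∧ c'.2.2 = c.2.2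
  | .acq l, c' => (c.1, (c'.1, l)) ∈ P.acqTr ∧ l ∈ free ∧ c'.2.1 = c.2.1 ∧ c'.2.2 = c.2.2 ∪ {l}
  | .rel l, c' => ((c.1, l), c'.1) ∈ P.relTr ∧ l ∈ c.2.2 ∧ c'.2.1 = c.2.1 ∧ c'.2.2 = c.2.2 \ {l}

/-- A 2-PDS communicating via locks `L`. -/
structure TwoPDS (Q₀ Γ₀ Q₁ Γ₁ L : Type) where
  P0 : PDS Q₀ Γ₀ L
  P1 : PDS Q₁ Γ₁ L

namespace TwoPDS

variable {Q₀ Γ₀ Q₁ Γ₁ L : Type}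

/-- A configuration of a 2-PDS. -/
abbrev Conf (Q₀ Γ₀ Q₁ Γ₁ L : Type) : Type := LConf Q₀ Γ₀ L × LConf Q₁ Γ₁ L

/-- The locks that are held by no thread. -/
def freeLocks (s : Conf Q₀ Γ₀ Q₁ Γ₁ L) : Set L := {l | l ∉ s.1.2.2 ∧ l ∉ s.2.2.2}

/-- The labelled transition relation of a 2-PDS: in a step labelled `(λ, i)`
only the `i`-th component changes. -/
def Step (CP : TwoPDS Q₀ Γ₀ Q₁ Γ₁ L) (s : Conf Q₀ Γ₀ Q₁ Γ₁ L) (lab : Label L × Fin 2)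
    (t : Conf Q₀ Γ₀ Q₁ Γ₁ L) : Prop :=
  (lab.2 = 0 ∧ CP.P0.LStep (freeLocks s) s.1 lab.1 t.1 ∧ t.2 = s.2) ∨
  (lab.2 = 1 ∧ CP.P1.LStep (freeLocks s) s.2 lab.1 t.2 ∧ t.1 = s.1)

/-- The initial configuration. -/
def initConf (CP : TwoPDS Q₀ Γ₀ Q₁ Γ₁ L) : Conf Q₀ Γ₀ Q₁ Γ₁ L :=
  ((CP.P0.start, [], ∅), (CP.P1.start, [], ∅))

/-- A (finite) computation `s 0 → s 1 → ⋯ → s len` of a 2-PDS, starting from the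
initial configuration; the transition from `s k` to `s (k+1)` has label `lab k`. -/
structure Comp (CP : TwoPDS Q₀ Γ₀ Q₁ Γ₁ L) where
  len : ℕ
  s : ℕ → Conf Q₀ Γ₀ Q₁ Γ₁ L
  lab : ℕ → Label L × Fin 2
  init : s 0 = CP.initConf
  step : ∀ k < len, CP.Step (s k) (lab k) (s (k + 1))

variable {CP : TwoPDS Q₀ Γ₀ Q₁ Γ₁ L}

/-- Height of the stack of thread `i` in the `k`-th configuration. -/
def Comp.height (c : Comp CP) (i : Fin 2) (k : ℕ) : ℕ :=
  if i = 0 then (c.s k).1.2.1.length else (c.s k).2.2.1.length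

/-- The set of locks held by thread `i` in the `k`-th configuration. -/
def Comp.lockset (c : Comp CP) (i : Fin 2) (k : ℕ) : Set L :=
  if i = 0 then (c.s k).1.2.2 else (c.s k).2.2.2

/-- The procedure return of thread `i` at position `j` matches the procedure call of
thread `i` at position `l`. -/
def Comp.Matching (c : Comp CP) (i : Fin 2) (l j : ℕ) : Prop :=
  l < j ∧ j < c.len ∧ c.lab l = (Label.push, i) ∧ c.lab j = (Label.pop, i) ∧
    c.height i l = c.height i (j + 1) ∧
    ∀ p, l + 1 ≤ p → p ≤ j → c.height i (l + 1) ≤ c.height i p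

/-- Thread `i` of the 2-PDS follows contextual locking. -/
def Contextual (CP : TwoPDS Q₀ Γ₀ Q₁ Γ₁ L) (i : Fin 2) : Prop :=
  ∀ c : Comp CP, ∀ l j, c.Matching i l j →
    c.lockset i l = c.lockset i j ∧ ∀ r, l ≤ r → r ≤ j → c.lockset i l ⊆ c.lockset i r

/-- `(l₁, l₂, l₃)` is a witness of non-well-bracketing of the computation `c`. -/
def Comp.Witness (c : Comp CP) (l₁ l₂ l₃ : ℕ) : Prop :=
  ∃ i : Fin 2, l₁ < l₂ ∧ l₂ < l₃ ∧ l₃ < c.len ∧ c.Matching i l₁ l₃ ∧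
    c.lab l₂ = (Label.push, 1 - i) ∧ ∀ j, c.Matching (1 - i) l₂ j → l₃ < j

/-- A computation is well-bracketed if it has no witness of non-well-bracketing. -/
def Comp.WellBracketed (c : Comp CP) : Prop := ∀ l₁ l₂ l₃, ¬ c.Witness l₁ l₂ l₃

/-- `Reach CP p q`: some computation of `CP` ends in a configuration whose control
states are `p` and `q`. -/
def Reach (CP : TwoPDS Q₀ Γ₀ Q₁ Γ₁ L) (p : Q₀) (q : Q₁) : Prop :=
  ∃ c : Comp CP, (c.s c.len).1.1 = p ∧ (c.s c.len).2.1 = q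

end TwoPDS
namespace TwoPDS
variable {Q₀ Γ₀ Q₁ Γ₁ L : Type} {CP : TwoPDS Q₀ Γ₀ Q₁ Γ₁ L}

lemma Comp.height_cases (c : Comp CP) {k : ℕ} (hk : k < c.len) (t : Fin 2) :
    (c.lab k = (Label.push, t) ∧ c.height t (k+1) = c.height t k + 1) ∨
    (c.lab k = (Label.pop, t) ∧ c.height t k = c.height t (k+1) + 1) ∨
    (c.lab k ≠ (Label.push, t) ∧ c.lab k ≠ (Label.pop, t) ∧ c.height t (k+1) = c.height t k) := by
  rcases c.step k hk with ⟨h2, hst, heq⟩ | ⟨h2, hst, heq⟩ <;> fin_cases t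
  · -- thread 0, t = 0
    cases hL : (c.lab k).1 <;> rw [hL] at hst <;> simp only [PDS.LStep] at hst
    · exact Or.inr (Or.inr ⟨by simp [Prod.ext_iff, hL], by simp [Prod.ext_iff, hL],
        by simp [Comp.height, hst.2.1]⟩)
    · obtain ⟨a, _, hs1, _⟩ := hst
      exact Or.inl ⟨Prod.ext_iff.mpr ⟨hL, h2⟩, by simp [Comp.height, hs1]⟩
    · obtain ⟨a, _, hs1, _⟩ := hst
      exact Or.inr (Or.inl ⟨Prod.ext_iff.mpr ⟨hL, h2⟩, by simp [Comp.height, hs1]⟩)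
    · exact Or.inr (Or.inr ⟨by simp [Prod.ext_iff, hL], by simp [Prod.ext_iff, hL],
        by simp [Comp.height, hst.2.2.1]⟩)
    · exact Or.inr (Or.inr ⟨by simp [Prod.ext_iff, hL], by simp [Prod.ext_iff, hL],
        by simp [Comp.height, hst.2.2.1]⟩)
  · -- thread 0, t = 1
    refine Or.inr (Or.inr ⟨?_, ?_, ?_⟩)
    · intro h; rw [h] at h2; simp at h2
    · intro h; rw [h] at h2; simp at h2
    · simp [Comp.height, heq]
  · -- thread 1, t = 0
    refine Or.inr (Or.inr ⟨?_, ?_, ?_⟩)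
    · intro h; rw [h] at h2; simp at h2
    · intro h; rw [h] at h2; simp at h2
    · simp [Comp.height, heq]
  · -- thread 1, t = 1
    cases hL : (c.lab k).1 <;> rw [hL] at hst <;> simp only [PDS.LStep] at hst
    · exact Or.inr (Or.inr ⟨by simp [Prod.ext_iff, hL], by simp [Prod.ext_iff, hL],
        by simp [Comp.height, hst.2.1]⟩)
    · obtain ⟨a, _, hs1, _⟩ := hst
      exact Or.inl ⟨Prod.ext_iff.mpr ⟨hL, h2⟩, by simp [Comp.height, hs1]⟩
    · obtain ⟨a, _, hs1, _⟩ := hst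
      exact Or.inr (Or.inl ⟨Prod.ext_iff.mpr ⟨hL, h2⟩, by simp [Comp.height, hs1]⟩)
    · exact Or.inr (Or.inr ⟨by simp [Prod.ext_iff, hL], by simp [Prod.ext_iff, hL],
        by simp [Comp.height, hst.2.2.1]⟩)
    · exact Or.inr (Or.inr ⟨by simp [Prod.ext_iff, hL], by simp [Prod.ext_iff, hL],
        by simp [Comp.height, hst.2.2.1]⟩)

lemma Comp.height_push (c : Comp CP) {k : ℕ} {t : Fin 2} (hk : k < c.len)
    (h : c.lab k = (Label.push, t)) : c.height t (k+1) = c.height t k + 1 := by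
  rcases c.height_cases hk t with ⟨_, h'⟩ | ⟨h1, _⟩ | ⟨h1, _, _⟩
  · exact h'
  · rw [h] at h1; simp [Prod.ext_iff] at h1
  · exact absurd h h1

lemma Comp.pop_of_decrease (c : Comp CP) {k : ℕ} {t : Fin 2} (hk : k < c.len)
    (h : c.height t (k+1) < c.height t k) :
    c.lab k = (Label.pop, t) ∧ c.height t k = c.height t (k+1) + 1 := by
  rcases c.height_cases hk t with ⟨_, h'⟩ | hh | ⟨_, _, h'⟩
  · omega
  · exact hh
  · omega

lemma Comp.matching_unique (c : Comp CP) {t : Fin 2} {l j₁ j₂ : ℕ}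
    (h1 : c.Matching t l j₁) (h2 : c.Matching t l j₂) : j₁ = j₂ := by
  have key : ∀ a b, c.Matching t l a → c.Matching t l b → a < b → False := by
    intro a b ha hb hab
    have hla : l < a := ha.1
    have hlen : b < c.len := hb.2.1
    have hl : l < c.len := by omega
    have hp := c.height_push hl ha.2.2.1
    have hmono := hb.2.2.2.2.2 (a+1) (by omega) (by omega)
    have heq : c.height t l = c.height t (a+1) := ha.2.2.2.2.1
    omega
  rcases lt_trichotomy j₁ j₂ with h | h | h
  · exact (key _ _ h1 h2 h).elim
  · exact h
  · exact (key _ _ h2 h1 h).elim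

lemma Comp.exists_matching (c : Comp CP) {t : Fin 2} {q m : ℕ}
    (hq : c.lab q = (Label.push, t)) (hqm : q < m) (hm : m ≤ c.len)
    (hh : c.height t m ≤ c.height t q) : ∃ j, c.Matching t q j ∧ j < m := by
  classical
  have hql : q < c.len := lt_of_lt_of_le hqm hm
  have hp := c.height_push hql hq
  have hne : m ≠ q + 1 := by rintro rfl; omega
  have hS : ∃ j, q < j ∧ j < m ∧ c.height t (j+1) ≤ c.height t q :=
    ⟨m - 1, by omega, by omega, by
      have hrw : m - 1 + 1 = m := by omega
      rw [hrw]; exact hh⟩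
  obtain ⟨j, ⟨hj1, hj2, hj3⟩, hmin⟩ :
      ∃ j, (q < j ∧ j < m ∧ c.height t (j+1) ≤ c.height t q) ∧
        ∀ j' < j, ¬(q < j' ∧ j' < m ∧ c.height t (j'+1) ≤ c.height t q) :=
    ⟨Nat.find hS, Nat.find_spec hS, fun j' h => Nat.find_min hS h⟩
  have hgt : ∀ p, q + 1 ≤ p → p ≤ j → c.height t q + 1 ≤ c.height t p := by
    intro p hp1 hp2
    rcases eq_or_lt_of_le hp1 with h | h
    · rw [← h]; omega
    · have hm' := hmin (p-1) (by omega)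
      have hrw : p - 1 + 1 = p := by omega
      rw [hrw] at hm'
      push_neg at hm'
      have := hm' (by omega) (by omega)
      omega
  have hjlen : j < c.len := by omega
  have hdec : c.height t (j+1) < c.height t j := by
    have := hgt j (by omega) le_rfl
    omega
  obtain ⟨hpop, hhj⟩ := c.pop_of_decrease hjlen hdec
  have hheq : c.height t q = c.height t (j+1) := by
    have := hgt j (by omega) le_rfl
    omega
  refine ⟨j, ⟨hj1, hjlen, hq, hpop, hheq, ?_⟩, hj2⟩
  intro p hp1 hp2
  rw [hp]
  exact hgt p hp1 hp2

end TwoPDS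

/-- Let `c` be a non-well-bracketed computation of a 2-PDS,
`lmin` the least first component over all witnesses of non-well-bracketing, the
transition at `lmin` a procedure call of thread `i` with matching return at `lrt`,
and `lsm` the least second component among witnesses of the form `(lmin, l₂, lrt)`.
Then (1) every procedure return of thread `1-i` at a position strictly between
`lmin` and `lsm` has its matching call strictly after `lmin`, and (2) every
procedure call of thread `1-i` at a position strictly between `lmin` and `lsm`
has a matching return strictly before `lsm`. -/
theorem witness_structure_between_lmin_lsm
    {Q₀ Γ₀ Q₁ Γ₁ L : Type} [Finite Q₀] [Finite Γ₀] [Finite Q₁] [Finite Γ₁] [Finite L]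
    (CP : TwoPDS Q₀ Γ₀ Q₁ Γ₁ L) (c : TwoPDS.Comp CP)
    (lmin lsm lrt : ℕ) (i : Fin 2)
    (hwit : ∃ l₂ l₃, c.Witness lmin l₂ l₃)
    (hleast : ∀ l₁ l₂ l₃, c.Witness l₁ l₂ l₃ → lmin ≤ l₁)
    (hcall : c.lab lmin = (Label.push, i))
    (hmatch : c.Matching i lmin lrt)
    (hsm : c.Witness lmin lsm lrt)
    (hsmleast : ∀ l₂, c.Witness lmin l₂ lrt → lsm ≤ l₂) :
    (∀ p lc, lmin < p → p < lsm → c.Matching (1 - i) lc p → lmin < lc) ∧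
    (∀ p, lmin < p → p < lsm → p < c.len → c.lab p = (Label.push, 1 - i) →
      ∃ j, c.Matching (1 - i) p j ∧ j < lsm) := by
  classical
  have fin2 : ∀ j : Fin 2, 1 - (1 - j) = j := by decide
  have fin2' : ∀ j : Fin 2, 1 - j ≠ j := by decide
  obtain ⟨i', hw1, hw2, hw3, hm', hlabsm, hafter⟩ := hsm
  have hi' : i' = i := by
    have h := hm'.2.2.1
    rw [hcall] at h
    have := (Prod.ext_iff.mp h).2
    exact this.symm
  rw [hi'] at hlabsm hafter
  constructor
  · -- Part (1)
    intro p lc hp1 hp2 hmc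
    by_contra hcon
    push_neg at hcon
    have hlc : lc < lmin := by
      rcases lt_or_eq_of_le hcon with h | h
      · exact h
      · exfalso
        have hthis := hmc.2.2.1
        rw [h, hcall] at hthis
        have : i = 1 - i := (Prod.ext_iff.mp hthis).2
        exact fin2' i this.symm
    have hwit2 : c.Witness lc lmin p := by
      refine ⟨1 - i, hlc, hp1, hmc.2.1, hmc, ?_, ?_⟩
      · rw [fin2 i]; exact hcall
      · intro j hj
        rw [fin2 i] at hj
        have := c.matching_unique hj hmatch
        subst this
        omega
    exact absurd (hleast _ _ _ hwit2) (by omega)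
  · -- Part (2)
    intro p hp1 hp2 hplen hlabp
    by_contra hcon
    push_neg at hcon
    have hall : ∀ j, c.Matching (1 - i) p j → lrt < j := by
      intro j hj
      have hlsm_le := hcon j hj
      have hlsm_lt : lsm < j := by
        rcases lt_or_eq_of_le hlsm_le with h | h
        · exact h
        · exfalso
          have h2 := hj.2.2.2.1
          rw [← h, hlabsm] at h2
          have := (Prod.ext_iff.mp h2).1
          simp at this
      by_contra hle
      push_neg at hle
      have hjlen : j < c.len := hj.2.1
      have hpp := c.height_push (show p < c.len by omega) hlabp
      have hint := hj.2.2.2.2.2 lsm (by omega) (by omega)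
      have hhe := hj.2.2.2.2.1
      obtain ⟨j', hj'm, hj'lt⟩ := c.exists_matching hlabsm
        (show lsm < j + 1 by omega) (show j + 1 ≤ c.len by omega)
        (show c.height (1-i) (j+1) ≤ c.height (1-i) lsm by omega)
      have := hafter j' hj'm
      omega
    have hwit2 : c.Witness lmin p lrt := ⟨i, hp1, by omega, hmatch.2.1, hmatch, hlabp, hall⟩
    exact absurd (hsmleast p hwit2) (by omega)
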